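/- Let f be holomorphic on D, a ∈ G, and S a transcendental singularity of f⁻¹ over a (i.e., a monotone choice V ↦ S(V) of components of f⁻¹(V) with empty intersection ⋂_V S(V)). Then there exists a curve Γ : [0,1) → D such that for every neighborhood V of a, f(Γ(t)) ∈ V for all t sufficiently close to 1; in particular Γ is an asymptotic curve of f with asymptotic value a. -/
import Mathlib

/-- The glued curve: on `[aN n, aN (n+1)]` it follows `g n`. -/
noncomputable def stmt3Glue (g : ℕ → ℝ → ℂ) (aN : ℕ → ℝ) : ℕ → ℝ → ℂ
  | 0 => g 0
  | (n+1) => fun t => if t ≤ aN (n+1) then stmt3Glue g aN n t else g (n+1) t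

lemma stmt3Glue_succ (g : ℕ → ℝ → ℂ) (aN : ℕ → ℝ) (n : ℕ) (t : ℝ) :
    stmt3Glue g aN (n+1) t = if t ≤ aN (n+1) then stmt3Glue g aN n t else g (n+1) t := rfl

open Classical in
noncomputable def stmt3Curve (g : ℕ → ℝ → ℂ) (aN : ℕ → ℝ)
    (hfind : ∀ t : ℝ, t < 1 → ∃ n, t < aN (n+1)) : ℝ → ℂ :=
  fun t => if ht : t < 1 then stmt3Glue g aN (Nat.find (hfind t ht)) t else g 0 0

open Classical in
lemma stmt3Curve_eq (g : ℕ → ℝ → ℂ) (aN : ℕ → ℝ)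
    (hfind : ∀ t : ℝ, t < 1 → ∃ n, t < aN (n+1)) (t : ℝ) (ht : t < 1) :
    stmt3Curve g aN hfind t = stmt3Glue g aN (Nat.find (hfind t ht)) t := dif_pos ht

/-- If `S` is a transcendental singularity of `f⁻¹` over `a` (a monotone
choice `V ↦ S(V)` of connected components of `f⁻¹(V)` with
`⋂_V S(V) = ∅`), then there is a curve `Γ : [0,1) → D` such that for every
neighborhood `V` of `a`, `f(Γ(t)) ∈ V` for all `t` close to `1`; in
particular `Γ` is an asymptotic curve of `f` (it leaves every compact subset
of `D`) with asymptotic value `a`. -/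
theorem stmt_3 (D G : Set ℂ) (hD : IsOpen D) (hG : IsOpen G)
    (f : ℂ → ℂ) (hf : DifferentiableOn ℂ f D)
    (hmaps : Set.MapsTo f D G) (hdense : G ⊆ closure (f '' D))
    (a : ℂ) (ha : a ∈ G) (S : Set ℂ → Set ℂ)
    (hScomp : ∀ V, IsOpen V → a ∈ V → V ⊆ G →
      ∃ z ∈ D ∩ f ⁻¹' V, S V = connectedComponentIn (D ∩ f ⁻¹' V) z)
    (hSmono : ∀ V₁ V₂, IsOpen V₁ → a ∈ V₁ → V₁ ⊆ G → IsOpen V₂ → a ∈ V₂ →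
      V₂ ⊆ G → V₁ ⊆ V₂ → S V₁ ⊆ S V₂)
    (hempty : (⋂ V ∈ {V : Set ℂ | IsOpen V ∧ a ∈ V ∧ V ⊆ G}, S V) = ∅) :
    ∃ Γ : ℝ → ℂ,
      ContinuousOn Γ (Set.Ico 0 1) ∧ (∀ t ∈ Set.Ico (0:ℝ) 1, Γ t ∈ D) ∧
      (∀ V, IsOpen V → a ∈ V → V ⊆ G →
        ∀ᶠ t in nhdsWithin 1 (Set.Ico (0:ℝ) 1), f (Γ t) ∈ V) ∧
      (∀ K : Set ℂ, K ⊆ D → IsCompact K →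
        ∀ᶠ t in nhdsWithin 1 (Set.Ico (0:ℝ) 1), Γ t ∉ K) ∧
      Filter.Tendsto (fun t => f (Γ t)) (nhdsWithin 1 (Set.Ico (0:ℝ) 1))
        (nhds a) := by
  classical
  -- choose a basic ball inside G
  obtain ⟨r, hr0, hrG⟩ := Metric.isOpen_iff.1 hG a ha
  set V : ℕ → Set ℂ := fun n => Metric.ball a (r / 2 ^ n) with hVdef
  have hrn : ∀ n : ℕ, 0 < r / 2 ^ n := fun n => div_pos hr0 (by positivity)
  have hrmono : ∀ {n m : ℕ}, n ≤ m → r / 2 ^ m ≤ r / 2 ^ n := by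
    intro n m hnm
    apply div_le_div_of_nonneg_left hr0.le (by positivity)
    exact pow_le_pow_right₀ one_le_two hnm
  have hVopen : ∀ n, IsOpen (V n) := fun n => Metric.isOpen_ball
  have hVa : ∀ n, a ∈ V n := fun n => Metric.mem_ball_self (hrn n)
  have hVle : ∀ {n m : ℕ}, n ≤ m → V m ⊆ V n := fun {n m} h =>
    Metric.ball_subset_ball (hrmono h)
  have hVG : ∀ n, V n ⊆ G := by
    intro n x hx
    apply hrG
    have h1 : r / 2 ^ n ≤ r := by simpa using hrmono (Nat.zero_le n)
    exact Metric.ball_subset_ball h1 hx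
  have hVcl : ∀ n, closure (V (n+1)) ⊆ V n := by
    intro n
    have h1 : closure (Metric.ball a (r / 2 ^ (n+1)))
        = Metric.closedBall a (r / 2 ^ (n+1)) :=
      closure_ball a (ne_of_gt (hrn (n+1)))
    show closure (Metric.ball a (r / 2 ^ (n+1))) ⊆ Metric.ball a (r / 2 ^ n)
    rw [h1]
    apply Metric.closedBall_subset_ball
    apply div_lt_div_of_pos_left hr0 (by positivity)
    exact pow_lt_pow_right₀ one_lt_two (Nat.lt_succ_self n)
  set U : ℕ → Set ℂ := fun n => D ∩ f ⁻¹' (V n) with hUdef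
  have hUopen : ∀ n, IsOpen (U n) :=
    fun n => hf.continuousOn.isOpen_inter_preimage hD (hVopen n)
  choose z hz hzS using fun n => hScomp (V n) (hVopen n) (hVa n) (hVG n)
  have hSopen : ∀ n, IsOpen (S (V n)) := fun n => by
    rw [hzS n]; exact (hUopen n).connectedComponentIn
  have hSsubU : ∀ n, S (V n) ⊆ U n := fun n => by
    rw [hzS n]; exact connectedComponentIn_subset _ _
  have hzmem : ∀ n, z n ∈ S (V n) := fun n => by
    rw [hzS n]; exact mem_connectedComponentIn (hz n)
  have hSle : ∀ {n m : ℕ}, n ≤ m → S (V m) ⊆ S (V n) := fun {n m} h =>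
    hSmono (V m) (V n) (hVopen m) (hVa m) (hVG m) (hVopen n) (hVa n) (hVG n)
      (hVle h)
  have hSconn : ∀ n, IsPathConnected (S (V n)) := by
    intro n
    rw [← (hSopen n).isConnected_iff_isPathConnected, hzS n]
    exact isConnected_connectedComponentIn_iff.2 (hz n)
  have hjoin : ∀ n, JoinedIn (S (V n)) (z n) (z (n+1)) := fun n =>
    (hSconn n).joinedIn _ (hzmem n) _ (hSle n.le_succ (hzmem (n+1)))
  set p : ∀ n, Path (z n) (z (n+1)) := fun n => (hjoin n).somePath with hpdef
  have hp : ∀ n t, p n t ∈ S (V n) := fun n => (hjoin n).somePath_mem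
  -- the subdivision points
  set aN : ℕ → ℝ := fun n => 1 - (2:ℝ)⁻¹ ^ n with haNdef
  have haN0 : aN 0 = 0 := by simp [haNdef]
  have haNlt : ∀ n, aN n < 1 := fun n => by
    have : (0:ℝ) < (2:ℝ)⁻¹ ^ n := by positivity
    simp only [haNdef]; linarith
  have haNmono : StrictMono aN := by
    intro n m hnm
    simp only [haNdef, sub_lt_sub_iff_left]
    exact pow_lt_pow_right_of_lt_one₀ (by norm_num) (by norm_num) hnm
  have haNnonneg : ∀ n, 0 ≤ aN n := fun n =>
    haN0 ▸ (haNmono.monotone (Nat.zero_le n))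
  have hfind : ∀ t : ℝ, t < 1 → ∃ n, t < aN (n+1) := by
    intro t ht
    obtain ⟨n, hn⟩ := exists_pow_lt_of_lt_one (x := 1 - t) (y := (2:ℝ)⁻¹)
      (by linarith) (by norm_num)
    refine ⟨n, ?_⟩
    have h2 : ((2:ℝ)⁻¹) ^ (n+1) ≤ (2:ℝ)⁻¹ ^ n :=
      pow_le_pow_of_le_one (by norm_num) (by norm_num) n.le_succ
    simp only [haNdef]
    linarith
  -- the pieces
  set g : ℕ → ℝ → ℂ := fun n t => (p n).extend ((t - aN n) * 2 ^ (n+1)) with hgdef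
  have hgcont : ∀ n, Continuous (g n) := fun n =>
    (p n).continuous_extend.comp (by fun_prop)
  have hgmem : ∀ n t, g n t ∈ S (V n) := by
    intro n t
    have hmem : g n t ∈ Set.range (p n).extend := ⟨_, rfl⟩
    rw [Path.extend_range] at hmem
    obtain ⟨s, hs⟩ := hmem
    rw [← hs]; exact hp n s
  have hdiff : ∀ n : ℕ, (aN (n+1) - aN n) * 2 ^ (n+1) = 1 := by
    intro n
    have h1 : ((2:ℝ)⁻¹) ^ (n+1) * 2 ^ (n+1) = 1 := by
      rw [inv_pow, inv_mul_cancel₀ (by positivity)]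
    have h2 : aN (n+1) - aN n = (2:ℝ)⁻¹ ^ (n+1) := by
      simp only [haNdef, pow_succ]; ring
    rw [h2, h1]
  have hgstart : ∀ n, g n (aN n) = z n := by
    intro n
    show (p n).extend ((aN n - aN n) * 2 ^ (n+1)) = z n
    rw [sub_self, zero_mul, Path.extend_zero]
  have hgend : ∀ n, g n (aN (n+1)) = z (n+1) := by
    intro n
    show (p n).extend ((aN (n+1) - aN n) * 2 ^ (n+1)) = z (n+1)
    rw [hdiff n, Path.extend_one]
  -- glue
  have hh_eq : ∀ n m, m ≤ n → ∀ t, aN m ≤ t → t ≤ aN (m+1) →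
      stmt3Glue g aN n t = g m t := by
    intro n
    induction n with
    | zero =>
      intro m hm t _ _
      have : m = 0 := Nat.le_zero.1 hm
      subst this; rfl
    | succ n ih =>
      intro m hm t ht1 ht2
      rw [stmt3Glue_succ]
      rcases Nat.lt_or_ge m (n+1) with hlt | hge
      · have hmn : m ≤ n := Nat.lt_succ_iff.1 hlt
        have ht2' : t ≤ aN (n+1) :=
          ht2.trans (haNmono.monotone (Nat.succ_le_succ hmn))
        rw [if_pos ht2']
        exact ih m hmn t ht1 ht2
      · have hm1 : m = n + 1 := le_antisymm hm hge
        subst hm1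
        by_cases hc : t ≤ aN (n+1)
        · have hteq : t = aN (n+1) := le_antisymm hc ht1
          rw [if_pos hc, hteq,
            ih n le_rfl (aN (n+1)) (haNmono.monotone n.le_succ) le_rfl,
            hgend n, hgstart (n+1)]
        · rw [if_neg hc]
  have hh_cont : ∀ n, Continuous (stmt3Glue g aN n) := by
    intro n
    induction n with
    | zero => exact hgcont 0
    | succ n ih =>
      have heq : stmt3Glue g aN (n+1) =
          fun t => if t ≤ aN (n+1) then stmt3Glue g aN n t else g (n+1) t := by
        funext t; exact stmt3Glue_succ g aN n t
      rw [heq]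
      refine Continuous.if_le ih (hgcont (n+1)) continuous_id continuous_const ?_
      intro x hx
      subst hx
      rw [hh_eq n n le_rfl (aN (n+1)) (haNmono.monotone n.le_succ) le_rfl,
        hgend n, hgstart (n+1)]
  have hh_stab : ∀ n₀ n, n₀ ≤ n → ∀ t, t ≤ aN (n₀+1) →
      stmt3Glue g aN n t = stmt3Glue g aN n₀ t := by
    intro n₀ n hn
    induction n, hn using Nat.le_induction with
    | base => intro t _; rfl
    | succ n hn ih =>
      intro t ht
      have ht' : t ≤ aN (n+1) :=
        ht.trans (haNmono.monotone (Nat.succ_le_succ hn))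
      rw [stmt3Glue_succ, if_pos ht']
      exact ih t ht
  -- the curve
  set Γ : ℝ → ℂ := stmt3Curve g aN hfind with hΓdef
  have hΓ_eq : ∀ n t, t < aN (n+1) → Γ t = stmt3Glue g aN n t := by
    intro n t ht
    have ht1 : t < 1 := ht.trans (haNlt (n+1))
    rw [hΓdef, stmt3Curve_eq g aN hfind t ht1]
    have hfle : Nat.find (hfind t ht1) ≤ n := Nat.find_min' _ ht
    have hspec : t < aN (Nat.find (hfind t ht1) + 1) := Nat.find_spec (hfind t ht1)
    exact (hh_stab _ n hfle t hspec.le).symm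
  have hexists_piece : ∀ t : ℝ, 0 ≤ t → t < 1 → ∃ m, aN m ≤ t ∧ t < aN (m+1) := by
    intro t ht0 ht1
    refine ⟨Nat.find (hfind t ht1), ?_, Nat.find_spec (hfind t ht1)⟩
    rcases Nat.eq_zero_or_pos (Nat.find (hfind t ht1)) with h0 | hpos
    · rw [h0, haN0]; exact ht0
    · obtain ⟨k, hk⟩ := Nat.exists_eq_succ_of_ne_zero hpos.ne'
      rw [hk]
      have := Nat.find_min (hfind t ht1) (m := k) (by omega)
      push_neg at this
      exact this
  have hΓ_piece : ∀ m t, aN m ≤ t → t < aN (m+1) → Γ t = g m t := by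
    intro m t ht1 ht2
    rw [hΓ_eq m t ht2]
    exact hh_eq m m le_rfl t ht1 ht2.le
  have hΓmemS : ∀ n t, aN n ≤ t → t < 1 → Γ t ∈ S (V n) := by
    intro n t ht ht1
    obtain ⟨m, hm1, hm2⟩ := hexists_piece t ((haNnonneg n).trans ht) ht1
    have hnm : n ≤ m := by
      have h3 : aN n < aN (m+1) := lt_of_le_of_lt ht hm2
      exact Nat.lt_succ_iff.1 (haNmono.lt_iff_lt.1 h3)
    rw [hΓ_piece m t hm1 hm2]
    exact hSle hnm (hgmem m t)
  have hΓD : ∀ t ∈ Set.Ico (0:ℝ) 1, Γ t ∈ D := by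
    intro t ht
    have := hΓmemS 0 t (haN0 ▸ ht.1) ht.2
    exact (hSsubU 0 this).1
  -- continuity
  have hΓcont : ContinuousOn Γ (Set.Ico 0 1) := by
    intro t ht
    obtain ⟨n, hn⟩ := hfind t ht.2
    have heq : Γ =ᶠ[nhds t] stmt3Glue g aN n :=
      Filter.eventuallyEq_of_mem (Iio_mem_nhds hn) (fun s hs => hΓ_eq n s hs)
    exact ((hh_cont n).continuousAt.congr heq.symm).continuousWithinAt
  -- eventually in S (V n)
  have hVev : ∀ n, ∀ᶠ t in nhdsWithin (1:ℝ) (Set.Ico 0 1),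
      f (Γ t) ∈ V n ∧ Γ t ∈ S (V n) := by
    intro n
    have h1 : Set.Ioi (aN n) ∈ nhdsWithin (1:ℝ) (Set.Ico 0 1) :=
      mem_nhdsWithin_of_mem_nhds (Ioi_mem_nhds (haNlt n))
    filter_upwards [h1, self_mem_nhdsWithin] with t ht1 ht2
    have hmem : Γ t ∈ S (V n) := hΓmemS n t (le_of_lt ht1) ht2.2
    exact ⟨(hSsubU n hmem).2, hmem⟩
  -- small balls
  have hsmall : ∀ ε : ℝ, 0 < ε → ∃ n : ℕ, r / 2 ^ n < ε := by
    intro ε hε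
    obtain ⟨n, hn⟩ := exists_pow_lt_of_lt_one (x := ε / r) (y := (2:ℝ)⁻¹)
      (div_pos hε hr0) (by norm_num)
    refine ⟨n, ?_⟩
    have h1 : r * ((2:ℝ)⁻¹ ^ n) < r * (ε / r) := by
      exact mul_lt_mul_of_pos_left hn hr0
    have h2 : r * (ε / r) = ε := by field_simp
    have h3 : r / 2 ^ n = r * ((2:ℝ)⁻¹ ^ n) := by
      rw [inv_pow, div_eq_mul_inv]
    linarith [h1, h2.symm ▸ h1]
  refine ⟨Γ, hΓcont, hΓD, ?_, ?_, ?_⟩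
  · -- eventually in any neighborhood W of a
    intro W hWo hWa hWG
    obtain ⟨ε, hε0, hεW⟩ := Metric.isOpen_iff.1 hWo a hWa
    obtain ⟨n, hn⟩ := hsmall ε hε0
    have hVW : V n ⊆ W := fun x hx =>
      hεW (Metric.ball_subset_ball hn.le hx)
    filter_upwards [hVev n] with t ht using hVW ht.1
  · -- leaves every compact set
    intro K hKD hK
    by_contra hcon
    rw [Filter.not_eventually] at hcon
    have hKne : ∀ n, (K ∩ closure (S (V n))).Nonempty := by
      intro n
      obtain ⟨t, h1, h2⟩ := (hcon.and_eventually (hVev n)).exists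
      exact ⟨Γ t, not_not.1 h1, subset_closure h2.2⟩
    obtain ⟨x, hx⟩ := IsCompact.nonempty_iInter_of_sequence_nonempty_isCompact_isClosed
      (fun n => K ∩ closure (S (V n)))
      (fun n => Set.inter_subset_inter_right K (closure_mono (hSle n.le_succ)))
      hKne (hK.inter_right isClosed_closure)
      (fun n => hK.isClosed.inter isClosed_closure)
    simp only [Set.mem_iInter] at hx
    have hxK : x ∈ K := (hx 0).1
    have hxcl : ∀ n, x ∈ closure (S (V n)) := fun n => (hx n).2
    have hxD : x ∈ D := hKD hxK
    have hcx : ContinuousAt f x := hf.continuousOn.continuousAt (hD.mem_nhds hxD)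
    have hxS : ∀ n, x ∈ S (V n) := by
      intro n
      have h1 : f x ∈ closure (f '' S (V (n+1))) :=
        hcx.continuousWithinAt.mem_closure_image (hxcl (n+1))
      have h2 : f x ∈ V n := by
        apply hVcl n
        refine closure_mono ?_ h1
        rintro y ⟨w, hw, rfl⟩
        exact (hSsubU (n+1) hw).2
      have hxU : x ∈ U n := ⟨hxD, h2⟩
      have hnhds : connectedComponentIn (U n) x ∈ nhds x :=
        ((hUopen n).connectedComponentIn).mem_nhds (mem_connectedComponentIn hxU)
      obtain ⟨y, hy1, hy2⟩ := mem_closure_iff_nhds.1 (hxcl n) _ hnhds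
      rw [hzS n]
      have e1 : connectedComponentIn (U n) x = connectedComponentIn (U n) y :=
        connectedComponentIn_eq hy1
      have e2 : connectedComponentIn (U n) (z n) = connectedComponentIn (U n) y :=
        connectedComponentIn_eq (by rw [← hzS n]; exact hy2)
      rw [e2, ← e1]
      exact mem_connectedComponentIn hxU
    have hmem : x ∈ ⋂ W ∈ {V : Set ℂ | IsOpen V ∧ a ∈ V ∧ V ⊆ G}, S W := by
      simp only [Set.mem_iInter, Set.mem_setOf_eq]
      rintro W ⟨hWo, hWa, hWG⟩
      obtain ⟨ε, hε0, hεW⟩ := Metric.isOpen_iff.1 hWo a hWa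
      obtain ⟨n, hn⟩ := hsmall ε hε0
      have hVW : V n ⊆ W := fun w hw =>
        hεW (Metric.ball_subset_ball hn.le hw)
      exact hSmono (V n) W (hVopen n) (hVa n) (hVG n) hWo hWa hWG hVW (hxS n)
    rw [hempty] at hmem
    exact hmem
  · -- tendsto
    rw [Metric.tendsto_nhds]
    intro ε hε
    obtain ⟨n, hn⟩ := hsmall ε hε
    filter_upwards [hVev n] with t ht
    exact (Metric.mem_ball.1 ht.1).trans hn
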